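/- For every integer n ≥ 0, the vertex v₀R^nL is ∼₂-equivalent to the vertex v₀L; that is, the points (replicate n R, L, 1) and ([], L, 1) are identified by ∼₂. (This is the paper's claim that under the second gluing the points v₀R^nL are identified for all n ≥ 0.) -/

import Mathlib

/-!
STATEMENT 1: Under the second gluing `∼₂`, the vertices `v₀RⁿL` are identified with
`v₀L` for every `n ≥ 0`; i.e. the points `(replicate n R, L, 1)` and `([], L, 1)` are
identified by `∼₂`.
-/

open unitInterval

/-- The words in letters `L = false`, `R = true` are given the discrete topology. -/
instance : TopologicalSpace (List Bool) := ⊥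

/-- The generating relation of the infinite rooted binary tree: `(w,d,0) ∼ (w,d',0)`
and `(w,d,1) ∼ (w ++ [d], d', 0)`. -/
inductive TreeRel : (List Bool × Bool × I) → (List Bool × Bool × I) → Prop
  | vertex (w : List Bool) (d d' : Bool) : TreeRel (w, d, 0) (w, d', 0)
  | edge (w : List Bool) (d d' : Bool) : TreeRel (w, d, 1) (w ++ [d], d', 0)

/-- The second gluing: at each vertex `v`, glue the segment `[v,vL]` to `[v,vRL]` by the
dilation by a factor of two, and glue the ray `[vL, vLRRR…)` to `[vRL, vRLRRR…)`
isometrically. -/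
inductive Glue2 : (List Bool × Bool × I) → (List Bool × Bool × I) → Prop
  | segL (w : List Bool) (α β : I) (hα : (α : ℝ) ≤ 1 / 2) (hβ : (β : ℝ) = 2 * (α : ℝ)) :
      Glue2 (w, false, α) (w, true, β)
  | segR (w : List Bool) (α β : I) (hα : 1 / 2 ≤ (α : ℝ)) (hβ : (β : ℝ) = 2 * (α : ℝ) - 1) :
      Glue2 (w, false, α) (w ++ [true], false, β)
  | ray (w : List Bool) (j : ℕ) (α : I) :
      Glue2 (w ++ [false] ++ List.replicate j true, true, α)
            (w ++ [true, false] ++ List.replicate j true, true, α)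

/-- The relation generating `∼₂`. -/
def Rel2 (a b : List Bool × Bool × I) : Prop := TreeRel a b ∨ Glue2 a b

theorem statement1 (n : ℕ) :
    Quot.mk Rel2 (List.replicate n true, false, 1) = Quot.mk Rel2 ([], false, 1) := by
  induction n with
  | zero => rfl
  | succ n ih =>
    rw [← ih, List.replicate_succ' (n := n) (a := true)]
    exact (Quot.sound (r := Rel2) (Or.inr (Glue2.segR (List.replicate n true) 1 1 (by norm_num)
      (by norm_num)))).symm
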